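/- Let c > 0 and let f : ℝ → ℝ be twice continuously differentiable on [−c, c] with f(−c) = f(c) = 0. If the signed curvature κ(x) = f''(x)/(1 + f'(x)^2)^(3/2) is strictly increasing on [−c, c], then α + β > 0, where α = arctan(f'(−c)) and β = arctan(f'(c)). (Modified Vogt's theorem for a spiral arc in normalized position.) -/

import Mathlib

/-- Signed curvature of the graph of `f` at abscissa `x`:
`κ(x) = f''(x) / (1 + f'(x)^2)^(3/2)`. -/
noncomputable def graphCurvature (f : ℝ → ℝ) (x : ℝ) : ℝ :=
  deriv (deriv f) x / (1 + deriv f x ^ 2) ^ ((3 : ℝ) / 2)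

noncomputable def sfun (t : ℝ) : ℝ := t / Real.sqrt (1 + t ^ 2)

lemma sfun_hasDerivAt (t : ℝ) :
    HasDerivAt sfun (1 / (1 + t ^ 2) ^ ((3 : ℝ) / 2)) t := by
  have h0 : (0:ℝ) < 1 + t ^ 2 := by positivity
  have hs : (0:ℝ) < Real.sqrt (1 + t ^ 2) := Real.sqrt_pos.mpr h0
  have h1 : HasDerivAt (fun t : ℝ => 1 + t ^ 2) (2 * t) t := by
    simpa using ((hasDerivAt_pow 2 t).const_add 1)
  have h2 : HasDerivAt (fun t : ℝ => Real.sqrt (1 + t ^ 2))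
      (1 / (2 * Real.sqrt (1 + t ^ 2)) * (2 * t)) t :=
    (Real.hasDerivAt_sqrt h0.ne').comp t h1
  have h3 := (hasDerivAt_id t).div h2 hs.ne'
  have hpow : (1 + t ^ 2 : ℝ) ^ ((3 : ℝ) / 2)
      = (1 + t ^ 2) * Real.sqrt (1 + t ^ 2) := by
    rw [show (3:ℝ)/2 = 1 + 1/2 by norm_num, Real.rpow_add h0, Real.rpow_one,
      ← Real.sqrt_eq_rpow]
  have hsq : Real.sqrt (1 + t ^ 2) ^ 2 = 1 + t ^ 2 := Real.sq_sqrt h0.le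
  refine (h3 : HasDerivAt sfun _ t).congr_deriv ?_
  symm
  rw [hpow]
  field_simp
  have hss : Real.sqrt (1 + t ^ 2) * Real.sqrt (1 + t ^ 2) = 1 + t ^ 2 := Real.mul_self_sqrt h0.le
  simp only [id_eq]
  linear_combination (-t ^ 2) * hsq

lemma sfun_strictMono : StrictMono sfun := by
  apply strictMono_of_deriv_pos
  intro x
  rw [(sfun_hasDerivAt x).deriv]
  have : (0:ℝ) < 1 + x ^ 2 := by positivity
  positivity

lemma sfun_neg (t : ℝ) : sfun (-t) = - sfun t := by
  simp [sfun, neg_div]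

lemma sfun_zero : sfun 0 = 0 := by simp [sfun]

lemma sfun_continuous : Continuous sfun :=
  continuous_iff_continuousAt.mpr fun t => (sfun_hasDerivAt t).differentiableAt.continuousAt

/-- Modified Vogt's theorem for a normalized spiral arc with strictly
increasing curvature: `α + β > 0`. -/
theorem modified_vogt (c : ℝ) (hc : 0 < c) (f : ℝ → ℝ)
    (hf : ContDiffOn ℝ 2 f (Set.Icc (-c) c))
    (hfl : f (-c) = 0) (hfr : f c = 0)
    (hmono : StrictMonoOn (graphCurvature f) (Set.Icc (-c) c)) :
    0 < Real.arctan (deriv f (-c)) + Real.arctan (deriv f c) := by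
  have hlt : -c < c := by linarith
  have hmemL : (-c) ∈ Set.Icc (-c) c := Set.left_mem_Icc.mpr hlt.le
  have hmemR : c ∈ Set.Icc (-c) c := Set.right_mem_Icc.mpr hlt.le
  have huniq : UniqueDiffOn ℝ (Set.Icc (-c) c) := uniqueDiffOn_Icc hlt
  set f₁ := derivWithin f (Set.Icc (-c) c) with hf₁def
  have hf₁cont : ContinuousOn f₁ (Set.Icc (-c) c) :=
    hf.continuousOn_derivWithin huniq (by norm_num)
  have hIoo_sub : Set.Ioo (-c) c ⊆ Set.Icc (-c) c := Set.Ioo_subset_Icc_self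
  have hfC2 : ContDiffOn ℝ 2 f (Set.Ioo (-c) c) := hf.mono hIoo_sub
  have hdiff : ∀ x ∈ Set.Ioo (-c) c, DifferentiableAt ℝ f x := fun x hx =>
    (hfC2.differentiableOn (by norm_num)).differentiableAt (isOpen_Ioo.mem_nhds hx)
  have hf1_eq : ∀ x ∈ Set.Ioo (-c) c, f₁ x = deriv f x := fun x hx =>
    (hdiff x hx).derivWithin (huniq x (hIoo_sub hx))
  have hdfC1 : ContDiffOn ℝ 1 (deriv f) (Set.Ioo (-c) c) :=
    hfC2.deriv_of_isOpen isOpen_Ioo (by norm_num)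
  have hdf2 : ∀ x ∈ Set.Ioo (-c) c, HasDerivAt (deriv f) (deriv (deriv f) x) x := fun x hx =>
    ((hdfC1.differentiableOn (by norm_num)).differentiableAt (isOpen_Ioo.mem_nhds hx)).hasDerivAt
  set G := fun x => sfun (f₁ x) with hGdef
  have hGcont : ContinuousOn G (Set.Icc (-c) c) :=
    sfun_continuous.comp_continuousOn hf₁cont
  -- derivative of G
  have hGderiv : ∀ x ∈ Set.Ioo (-c) c, HasDerivAt G (graphCurvature f x) x := by
    intro x hx
    have hev : f₁ =ᶠ[nhds x] deriv f :=
      Filter.eventuallyEq_of_mem (isOpen_Ioo.mem_nhds hx) hf1_eq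
    have h1 : HasDerivAt f₁ (deriv (deriv f) x) x :=
      (hdf2 x hx).congr_of_eventuallyEq hev
    have h2 := (sfun_hasDerivAt (f₁ x)).comp x h1
    refine (h2 : HasDerivAt G _ x).congr_deriv ?_
    symm
    unfold graphCurvature
    rw [← hf1_eq x hx, mul_comm, mul_one_div]
  -- FTC : integral of f₁ over [-c,c] is 0
  have hfd : ∀ x ∈ Set.Ioo (-c) c, HasDerivAt f (f₁ x) x := by
    intro x hx
    rw [hf1_eq x hx]
    exact (hdiff x hx).hasDerivAt
  have hint : IntervalIntegrable f₁ MeasureTheory.volume (-c) c := by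
    apply ContinuousOn.intervalIntegrable
    rwa [Set.uIcc_of_le hlt.le]
  have hFTC : (∫ x in (-c)..c, f₁ x) = 0 := by
    rw [intervalIntegral.integral_eq_sub_of_hasDeriv_right_of_le hlt.le hf.continuousOn
      (fun x hx => (hfd x hx).hasDerivWithinAt) hint, hfr, hfl, sub_zero]
  -- core : arctan (f₁ (-c)) + arctan (f₁ c) > 0
  have hGconv : StrictConvexOn ℝ (Set.Icc (-c) c) G := by
    apply StrictMonoOn.strictConvexOn_of_deriv (convex_Icc _ _) hGcont
    rw [interior_Icc]
    intro x hx y hy hxy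
    rw [(hGderiv x hx).deriv, (hGderiv y hy).deriv]
    exact hmono (hIoo_sub hx) (hIoo_sub hy) hxy
  have hkey : ∀ x ∈ Set.Ioo (-c) c, G x + G (-x) < G (-c) + G c := by
    intro x hx
    have hc2 : (0:ℝ) < 2*c := by linarith
    have hμ : 0 < (c - x)/(2*c) := div_pos (by linarith [hx.2]) hc2
    have hν : 0 < (c + x)/(2*c) := div_pos (by linarith [hx.1]) hc2
    have hμν : (c - x)/(2*c) + (c + x)/(2*c) = 1 := by field_simp; ring
    have hne : (-c) ≠ c := by intro h; linarith [h]
    have h1 := hGconv.2 hmemL hmemR hne hμ hν hμν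
    have h2 := hGconv.2 hmemL hmemR hne hν hμ (by linarith [hμν])
    simp only [smul_eq_mul] at h1 h2
    have e1 : (c - x)/(2*c) * (-c) + (c + x)/(2*c) * c = x := by field_simp; ring
    have e2 : (c + x)/(2*c) * (-c) + (c - x)/(2*c) * c = -x := by field_simp; ring
    rw [e1] at h1
    rw [e2] at h2
    have h3 : (c - x)/(2*c) * G (-c) + (c + x)/(2*c) * G c
        + ((c + x)/(2*c) * G (-c) + (c - x)/(2*c) * G c) = G (-c) + G c := by
      linear_combination (G (-c) + G c) * hμν
    linarith
  have hcore : 0 < Real.arctan (f₁ (-c)) + Real.arctan (f₁ c) := by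
    by_contra hcon
    push_neg at hcon
    have hA : f₁ (-c) ≤ -(f₁ c) := by
      have h1 : Real.arctan (f₁ (-c)) ≤ Real.arctan (-(f₁ c)) := by
        rw [Real.arctan_neg]; linarith
      exact (Real.arctan_strictMono.le_iff_le).mp h1
    have hGsum : G (-c) + G c ≤ 0 := by
      have h3 : sfun (f₁ (-c)) ≤ sfun (-(f₁ c)) := sfun_strictMono.monotone hA
      rw [sfun_neg] at h3
      show sfun (f₁ (-c)) + sfun (f₁ c) ≤ 0
      linarith
    have hneg : ∀ x ∈ Set.Ioo (-c) c, f₁ x + f₁ (-x) < 0 := by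
      intro x hx
      have h4 := hkey x hx
      have h5 : sfun (f₁ x) < sfun (-(f₁ (-x))) := by
        rw [sfun_neg]
        have h6 : G x + G (-x) < 0 := lt_of_lt_of_le h4 hGsum
        have h7 : sfun (f₁ x) + sfun (f₁ (-x)) < 0 := h6
        linarith
      have h6 := sfun_strictMono.lt_iff_lt.mp h5
      linarith
    have hint1 : IntervalIntegrable f₁ MeasureTheory.volume 0 c := by
      apply ContinuousOn.intervalIntegrable
      apply hf₁cont.mono
      rw [Set.uIcc_of_le hc.le]
      exact Set.Icc_subset_Icc (by linarith) le_rfl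
    have hint0 : IntervalIntegrable f₁ MeasureTheory.volume (-c) 0 := by
      apply ContinuousOn.intervalIntegrable
      apply hf₁cont.mono
      rw [Set.uIcc_of_le (by linarith : (-c) ≤ 0)]
      exact Set.Icc_subset_Icc le_rfl hc.le
    have hint2 : IntervalIntegrable (fun x => f₁ (-x)) MeasureTheory.volume 0 c := by
      apply ContinuousOn.intervalIntegrable
      apply ContinuousOn.comp hf₁cont (continuous_neg.continuousOn)
      intro x hx
      rw [Set.uIcc_of_le hc.le] at hx
      constructor <;> simp <;> [linarith [hx.2]; linarith [hx.1]]
    have hsplit : (∫ x in (0:ℝ)..c, f₁ x) + (∫ x in (0:ℝ)..c, f₁ (-x)) = 0 := by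
      have e1 : (∫ x in (0:ℝ)..c, f₁ (-x)) = ∫ x in (-c)..(0:ℝ), f₁ x := by
        rw [intervalIntegral.integral_comp_neg]; norm_num
      rw [e1, add_comm, intervalIntegral.integral_add_adjacent_intervals hint0 hint1]
      exact hFTC
    have hsum_int : IntervalIntegrable (fun x => -(f₁ x + f₁ (-x))) MeasureTheory.volume 0 c :=
      (hint1.add hint2).neg
    have hposint : 0 < ∫ x in (0:ℝ)..c, -(f₁ x + f₁ (-x)) := by
      apply intervalIntegral.intervalIntegral_pos_of_pos_on hsum_int _ hc
      intro x hx
      have hxI : x ∈ Set.Ioo (-c) c := ⟨by linarith [hx.1], hx.2⟩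
      linarith [hneg x hxI]
    have hzero : (∫ x in (0:ℝ)..c, -(f₁ x + f₁ (-x))) = 0 := by
      rw [intervalIntegral.integral_neg, intervalIntegral.integral_add hint1 hint2, hsplit,
        neg_zero]
    linarith
  -- endpoint claims
  have hclaimR : deriv f c = f₁ c ∨ (deriv f c = 0 ∧ graphCurvature f c = 0) := by
    by_cases hd : DifferentiableAt ℝ f c
    · exact Or.inl (hd.derivWithin (huniq c hmemR)).symm
    · have h0 : deriv f c = 0 := deriv_zero_of_not_differentiableAt hd
      by_cases hB : f₁ c = 0
      · exact Or.inl (by rw [h0, hB])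
      · refine Or.inr ⟨h0, ?_⟩
        have hNB : Filter.NeBot (nhdsWithin c (Set.Ioo (-c) c)) := by
          apply mem_closure_iff_nhdsWithin_neBot.mp
          rw [closure_Ioo (by intro h; linarith [h] : (-c) ≠ c)]
          exact hmemR
        have hdd : ¬ DifferentiableAt ℝ (deriv f) c := by
          intro hdd
          have h1 : Filter.Tendsto f₁ (nhdsWithin c (Set.Ioo (-c) c)) (nhds (f₁ c)) :=
            (hf₁cont c hmemR).mono hIoo_sub
          have h2 : Filter.Tendsto (deriv f) (nhdsWithin c (Set.Ioo (-c) c)) (nhds (f₁ c)) := by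
            apply h1.congr'
            filter_upwards [self_mem_nhdsWithin] with y hy
            exact hf1_eq y hy
          have h3 : Filter.Tendsto (deriv f) (nhdsWithin c (Set.Ioo (-c) c)) (nhds 0) := by
            have h4 : Filter.Tendsto (deriv f) (nhdsWithin c (Set.Ioo (-c) c))
                (nhds (deriv f c)) := hdd.continuousAt.tendsto.mono_left nhdsWithin_le_nhds
            rwa [h0] at h4
          exact hB (tendsto_nhds_unique h2 h3)
        have hz : deriv (deriv f) c = 0 := deriv_zero_of_not_differentiableAt hdd
        simp [graphCurvature, hz]
  have hclaimL : deriv f (-c) = f₁ (-c) ∨ (deriv f (-c) = 0 ∧ graphCurvature f (-c) = 0) := by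
    by_cases hd : DifferentiableAt ℝ f (-c)
    · exact Or.inl (hd.derivWithin (huniq (-c) hmemL)).symm
    · have h0 : deriv f (-c) = 0 := deriv_zero_of_not_differentiableAt hd
      by_cases hB : f₁ (-c) = 0
      · exact Or.inl (by rw [h0, hB])
      · refine Or.inr ⟨h0, ?_⟩
        have hNB : Filter.NeBot (nhdsWithin (-c) (Set.Ioo (-c) c)) := by
          apply mem_closure_iff_nhdsWithin_neBot.mp
          rw [closure_Ioo (by intro h; linarith [h] : (-c) ≠ c)]
          exact hmemL
        have hdd : ¬ DifferentiableAt ℝ (deriv f) (-c) := by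
          intro hdd
          have h1 : Filter.Tendsto f₁ (nhdsWithin (-c) (Set.Ioo (-c) c)) (nhds (f₁ (-c))) :=
            (hf₁cont (-c) hmemL).mono hIoo_sub
          have h2 : Filter.Tendsto (deriv f) (nhdsWithin (-c) (Set.Ioo (-c) c))
              (nhds (f₁ (-c))) := by
            apply h1.congr'
            filter_upwards [self_mem_nhdsWithin] with y hy
            exact hf1_eq y hy
          have h3 : Filter.Tendsto (deriv f) (nhdsWithin (-c) (Set.Ioo (-c) c)) (nhds 0) := by
            have h4 : Filter.Tendsto (deriv f) (nhdsWithin (-c) (Set.Ioo (-c) c))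
                (nhds (deriv f (-c))) := hdd.continuousAt.tendsto.mono_left nhdsWithin_le_nhds
            rwa [h0] at h4
          exact hB (tendsto_nhds_unique h2 h3)
        have hz : deriv (deriv f) (-c) = 0 := deriv_zero_of_not_differentiableAt hdd
        simp [graphCurvature, hz]
  -- if curvature is positive inside, the right endpoint slope is positive
  have hposR : (∀ x ∈ Set.Ioo (-c) c, 0 < graphCurvature f x) → 0 < f₁ c := by
    intro hpos
    by_contra hBle
    push_neg at hBle
    have hGm : StrictMonoOn G (Set.Icc (-c) c) := by
      apply strictMonoOn_of_deriv_pos (convex_Icc _ _) hGcont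
      rw [interior_Icc]
      intro x hx
      rw [(hGderiv x hx).deriv]
      exact hpos x hx
    have hneg : ∀ x ∈ Set.Ioo (-c) c, f₁ x < 0 := by
      intro x hx
      have h1 : G x < G c := hGm (hIoo_sub hx) hmemR hx.2
      have h2 : sfun (f₁ c) ≤ sfun 0 := sfun_strictMono.monotone hBle
      rw [sfun_zero] at h2
      have h3 : sfun (f₁ x) < sfun 0 := by rw [sfun_zero]; exact lt_of_lt_of_le h1 h2
      exact sfun_strictMono.lt_iff_lt.mp h3
    have hposint : 0 < ∫ x in (-c)..c, -(f₁ x) := by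
      apply intervalIntegral.intervalIntegral_pos_of_pos_on hint.neg _ hlt
      intro x hx
      simp only [Pi.neg_apply]
      linarith [hneg x hx]
    rw [intervalIntegral.integral_neg, hFTC] at hposint
    norm_num at hposint
  have hposL : (∀ x ∈ Set.Ioo (-c) c, graphCurvature f x < 0) → 0 < f₁ (-c) := by
    intro hpos
    by_contra hBle
    push_neg at hBle
    have hGm : StrictAntiOn G (Set.Icc (-c) c) := by
      apply strictAntiOn_of_deriv_neg (convex_Icc _ _) hGcont
      rw [interior_Icc]
      intro x hx
      rw [(hGderiv x hx).deriv]
      exact hpos x hx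
    have hneg : ∀ x ∈ Set.Ioo (-c) c, f₁ x < 0 := by
      intro x hx
      have h1 : G x < G (-c) := hGm hmemL (hIoo_sub hx) hx.1
      have h2 : sfun (f₁ (-c)) ≤ sfun 0 := sfun_strictMono.monotone hBle
      rw [sfun_zero] at h2
      have h3 : sfun (f₁ x) < sfun 0 := by rw [sfun_zero]; exact lt_of_lt_of_le h1 h2
      exact sfun_strictMono.lt_iff_lt.mp h3
    have hposint : 0 < ∫ x in (-c)..c, -(f₁ x) := by
      apply intervalIntegral.intervalIntegral_pos_of_pos_on hint.neg _ hlt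
      intro x hx
      simp only [Pi.neg_apply]
      linarith [hneg x hx]
    rw [intervalIntegral.integral_neg, hFTC] at hposint
    norm_num at hposint
  rcases hclaimL with hL | ⟨hL0, hLk⟩
  · rcases hclaimR with hR | ⟨hR0, hRk⟩
    · rw [hL, hR]; exact hcore
    · -- right junk : curvature at c is 0, so curvature < 0 inside
      have h1 : ∀ x ∈ Set.Ioo (-c) c, graphCurvature f x < 0 := fun x hx => by
        have := hmono (hIoo_sub hx) hmemR hx.2
        rwa [hRk] at this
      have h2 := hposL h1
      rw [hL, hR0, Real.arctan_zero, add_zero]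
      calc (0:ℝ) = Real.arctan 0 := Real.arctan_zero.symm
        _ < Real.arctan (f₁ (-c)) := Real.arctan_strictMono h2
  · rcases hclaimR with hR | ⟨hR0, hRk⟩
    · have h1 : ∀ x ∈ Set.Ioo (-c) c, 0 < graphCurvature f x := fun x hx => by
        have := hmono hmemL (hIoo_sub hx) hx.1
        rwa [hLk] at this
      have h2 := hposR h1
      rw [hL0, hR, Real.arctan_zero, zero_add]
      calc (0:ℝ) = Real.arctan 0 := Real.arctan_zero.symm
        _ < Real.arctan (f₁ c) := Real.arctan_strictMono h2
    · exfalso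
      have := hmono hmemL hmemR hlt
      rw [hLk, hRk] at this
      exact lt_irrefl 0 this
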